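/- Volga of the barrier-pricing parameter 𝒜: fix K > 0, T > 0, S > 0, r_d, r_f ∈ ℝ and φ ∈ {1, −1}. For σ > 0 let 𝒜(σ) = φ(S e^{-r_f T} N(φx₁) − K e^{-r_d T} N(φ(x₁ − σ√T))) with x₁ = ln(S/K)/(σ√T) + (1+α)σ√T and α = (r_d − r_f − σ²/2)/σ². Then the second derivative ∂²𝒜/∂σ² exists at every σ > 0 and equals (1/(8√(2π) σ⁵ T^{3/2})) · [ −16Kσ²T(ln(S/K) + T(r_d − r_f)) E_d + 16σ²ST(ln(S/K) + T(r_d − r_f)) E_f + K(2ln(S/K) + T(2r_d − 2r_f − σ²))(2ln(S/K) + T(2r_d − 2r_f + σ²))² E_d − S(2ln(S/K) + T(2r_d − 2r_f − σ²))²(2ln(S/K) + T(2r_d − 2r_f + σ²)) E_f ], where E_d = exp(−(T(−2r_d + 2r_f + σ²) − 2ln(S/K))²/(8σ²T) − r_d T) and E_f = exp(−(2ln(S/K) + T(2r_d − 2r_f + σ²))²/(8σ²T) − r_f T). -/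

import Mathlib

noncomputable def stdNormalCdf (z : ℝ) : ℝ :=
  ∫ x in Set.Iic z, (1 / Real.sqrt (2 * Real.pi)) * Real.exp (-x ^ 2 / 2)

lemma gauss_integrable : MeasureTheory.Integrable
    (fun x : ℝ => (1 / Real.sqrt (2 * Real.pi)) * Real.exp (-x ^ 2 / 2)) := by
  have h : (fun x : ℝ => (1 / Real.sqrt (2 * Real.pi)) * Real.exp (-x ^ 2 / 2))
      = fun x => (1 / Real.sqrt (2 * Real.pi)) * Real.exp (-(1/2 : ℝ) * x ^ 2) := by
    funext x; ring_nf
  rw [h]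
  exact (integrable_exp_neg_mul_sq (by norm_num)).const_mul _

lemma hasDerivAt_stdNormalCdf (z : ℝ) :
    HasDerivAt stdNormalCdf ((1 / Real.sqrt (2 * Real.pi)) * Real.exp (-z ^ 2 / 2)) z := by
  have hcont : Continuous (fun x : ℝ => (1 / Real.sqrt (2 * Real.pi)) * Real.exp (-x ^ 2 / 2)) := by
    continuity
  have heq : stdNormalCdf = fun t => stdNormalCdf 0 +
      ∫ x in (0:ℝ)..t, (1 / Real.sqrt (2 * Real.pi)) * Real.exp (-x ^ 2 / 2) := by
    funext t
    have := intervalIntegral.integral_Iic_sub_Iic (μ := MeasureTheory.volume)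
      (f := fun x : ℝ => (1 / Real.sqrt (2 * Real.pi)) * Real.exp (-x ^ 2 / 2))
      (a := 0) (b := t) gauss_integrable.integrableOn gauss_integrable.integrableOn
    simp only [stdNormalCdf]
    linarith [this]
  rw [heq]
  exact (intervalIntegral.integral_hasDerivAt_right
    gauss_integrable.intervalIntegrable
    (hcont.stronglyMeasurableAtFilter _ _) hcont.continuousAt).const_add _

lemma vega_hasDerivAt (a c Cf Cd φ : ℝ) (hφ : φ = 1 ∨ φ = -1) (v : ℝ) (hv : v ≠ 0) :
    HasDerivAt (fun w => φ * (Cf * stdNormalCdf (φ * (a * w⁻¹ + c * w)) -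
        Cd * stdNormalCdf (φ * (a * w⁻¹ - c * w))))
      (1 / Real.sqrt (2 * Real.pi) *
        (Cf * (Real.exp (-(a * v⁻¹ + c * v) ^ 2 / 2) * (c - a * (v ^ 2)⁻¹)) -
         Cd * (Real.exp (-(a * v⁻¹ - c * v) ^ 2 / 2) * (-c - a * (v ^ 2)⁻¹)))) v := by
  have hx1 : HasDerivAt (fun w : ℝ => a * w⁻¹ + c * w) (c - a * (v ^ 2)⁻¹) v := by
    have h := ((hasDerivAt_inv hv).const_mul a).add ((hasDerivAt_id v).const_mul c)
    exact h.congr_deriv (by ring)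
  have hx2 : HasDerivAt (fun w : ℝ => a * w⁻¹ - c * w) (-c - a * (v ^ 2)⁻¹) v := by
    have h := ((hasDerivAt_inv hv).const_mul a).sub ((hasDerivAt_id v).const_mul c)
    exact h.congr_deriv (by ring)
  have hN1 := (hasDerivAt_stdNormalCdf (φ * (a * v⁻¹ + c * v))).comp v (hx1.const_mul φ)
  have hN2 := (hasDerivAt_stdNormalCdf (φ * (a * v⁻¹ - c * v))).comp v (hx2.const_mul φ)
  have h := ((hN1.const_mul Cf).sub (hN2.const_mul Cd)).const_mul φ
  exact h.congr_deriv (by rcases hφ with rfl | rfl <;> ring_nf)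

lemma volga_aux (a c Cf Cd : ℝ) (σ : ℝ) (hσ : σ ≠ 0) :
    HasDerivAt (fun v : ℝ => 1 / Real.sqrt (2 * Real.pi) *
        (Cf * (Real.exp (-(a * v⁻¹ + c * v) ^ 2 / 2) * (c - a * (v ^ 2)⁻¹)) -
         Cd * (Real.exp (-(a * v⁻¹ - c * v) ^ 2 / 2) * (-c - a * (v ^ 2)⁻¹))))
      (1 / Real.sqrt (2 * Real.pi) *
        (Cf * (Real.exp (-(a * σ⁻¹ + c * σ) ^ 2 / 2) *
            (2 * a * (σ ^ 3)⁻¹ - (a * σ⁻¹ + c * σ) * (c - a * (σ ^ 2)⁻¹) ^ 2)) -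
         Cd * (Real.exp (-(a * σ⁻¹ - c * σ) ^ 2 / 2) *
            (2 * a * (σ ^ 3)⁻¹ - (a * σ⁻¹ - c * σ) * (-c - a * (σ ^ 2)⁻¹) ^ 2)))) σ := by
  have hx1 : HasDerivAt (fun w : ℝ => a * w⁻¹ + c * w) (c - a * (σ ^ 2)⁻¹) σ := by
    have h := ((hasDerivAt_inv hσ).const_mul a).add ((hasDerivAt_id σ).const_mul c)
    exact h.congr_deriv (by ring)
  have hx2 : HasDerivAt (fun w : ℝ => a * w⁻¹ - c * w) (-c - a * (σ ^ 2)⁻¹) σ := by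
    have h := ((hasDerivAt_inv hσ).const_mul a).sub ((hasDerivAt_id σ).const_mul c)
    exact h.congr_deriv (by ring)
  have hq1 : HasDerivAt (fun w : ℝ => -(a * w⁻¹ + c * w) ^ 2 / 2)
      (-((a * σ⁻¹ + c * σ) * (c - a * (σ ^ 2)⁻¹))) σ := by
    have h := ((hx1.pow 2).neg).div_const 2
    exact h.congr_deriv (by push_cast; ring)
  have hq2 : HasDerivAt (fun w : ℝ => -(a * w⁻¹ - c * w) ^ 2 / 2)
      (-((a * σ⁻¹ - c * σ) * (-c - a * (σ ^ 2)⁻¹))) σ := by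
    have h := ((hx2.pow 2).neg).div_const 2
    exact h.congr_deriv (by push_cast; ring)
  have hdx1 : HasDerivAt (fun w : ℝ => c - a * (w ^ 2)⁻¹) (2 * a * (σ ^ 3)⁻¹) σ := by
    have h := (hasDerivAt_const σ c).sub
      (((hasDerivAt_pow 2 σ).inv (pow_ne_zero 2 hσ)).const_mul a)
    exact h.congr_deriv (by field_simp; ring)
  have hdx2 : HasDerivAt (fun w : ℝ => -c - a * (w ^ 2)⁻¹) (2 * a * (σ ^ 3)⁻¹) σ := by
    have h := (hasDerivAt_const σ (-c)).sub
      (((hasDerivAt_pow 2 σ).inv (pow_ne_zero 2 hσ)).const_mul a)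
    exact h.congr_deriv (by field_simp; ring)
  have h := (((hq1.exp.mul hdx1).const_mul Cf).sub
    ((hq2.exp.mul hdx2).const_mul Cd)).const_mul (1 / Real.sqrt (2 * Real.pi))
  exact h.congr_deriv (by ring)

/-- Volga of the barrier-pricing parameter `𝒜`: the second derivative `∂²𝒜/∂σ²`
exists and is given by the stated closed formula. -/
theorem volga_A (K T S rd rf φ : ℝ) (hK : 0 < K) (hT : 0 < T) (hS : 0 < S)
    (hφ : φ = 1 ∨ φ = -1) (σ : ℝ) (hσ : 0 < σ) :
    HasDerivAt (deriv (fun v : ℝ =>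
        φ * (S * Real.exp (-rf * T) *
            stdNormalCdf (φ * (Real.log (S / K) / (v * Real.sqrt T) +
              (1 + (rd - rf - v ^ 2 / 2) / v ^ 2) * (v * Real.sqrt T))) -
          K * Real.exp (-rd * T) *
            stdNormalCdf (φ * (Real.log (S / K) / (v * Real.sqrt T) +
              (1 + (rd - rf - v ^ 2 / 2) / v ^ 2) * (v * Real.sqrt T) - v * Real.sqrt T)))))
      (1 / (8 * Real.sqrt (2 * Real.pi) * σ ^ 5 * T ^ ((3 : ℝ) / 2)) *
        (-16 * K * σ ^ 2 * T * (Real.log (S / K) + T * (rd - rf)) *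
            Real.exp (-(T * (-2 * rd + 2 * rf + σ ^ 2) - 2 * Real.log (S / K)) ^ 2 /
                (8 * σ ^ 2 * T) - rd * T) +
          16 * σ ^ 2 * S * T * (Real.log (S / K) + T * (rd - rf)) *
            Real.exp (-(2 * Real.log (S / K) + T * (2 * rd - 2 * rf + σ ^ 2)) ^ 2 /
                (8 * σ ^ 2 * T) - rf * T) +
          K * (2 * Real.log (S / K) + T * (2 * rd - 2 * rf - σ ^ 2)) *
            (2 * Real.log (S / K) + T * (2 * rd - 2 * rf + σ ^ 2)) ^ 2 *
            Real.exp (-(T * (-2 * rd + 2 * rf + σ ^ 2) - 2 * Real.log (S / K)) ^ 2 /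
                (8 * σ ^ 2 * T) - rd * T) -
          S * (2 * Real.log (S / K) + T * (2 * rd - 2 * rf - σ ^ 2)) ^ 2 *
            (2 * Real.log (S / K) + T * (2 * rd - 2 * rf + σ ^ 2)) *
            Real.exp (-(2 * Real.log (S / K) + T * (2 * rd - 2 * rf + σ ^ 2)) ^ 2 /
                (8 * σ ^ 2 * T) - rf * T))) σ := by
  have hs0 : 0 < Real.sqrt T := Real.sqrt_pos.mpr hT
  set s := Real.sqrt T with hs_def
  have hsq : s ^ 2 = T := Real.sq_sqrt hT.le
  set L := Real.log (S / K) with hL_def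
  set a := (L + T * (rd - rf)) / s with ha_def
  set c := s / 2 with hc_def
  set Cf := S * Real.exp (-rf * T) with hCf_def
  set Cd := K * Real.exp (-rd * T) with hCd_def
  -- pointwise equality of the pricing function with the canonical form on (0, ∞)
  have hpt : ∀ v : ℝ, v ∈ Set.Ioi (0:ℝ) →
      φ * (Cf * stdNormalCdf (φ * (L / (v * s) +
            (1 + (rd - rf - v ^ 2 / 2) / v ^ 2) * (v * s))) -
          Cd * stdNormalCdf (φ * (L / (v * s) +
            (1 + (rd - rf - v ^ 2 / 2) / v ^ 2) * (v * s) - v * s)))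
      = φ * (Cf * stdNormalCdf (φ * (a * v⁻¹ + c * v)) -
          Cd * stdNormalCdf (φ * (a * v⁻¹ - c * v))) := by
    intro v hv
    have hv0 : v ≠ 0 := ne_of_gt hv
    have h1 : L / (v * s) + (1 + (rd - rf - v ^ 2 / 2) / v ^ 2) * (v * s)
        = a * v⁻¹ + c * v := by
      rw [ha_def, hc_def, ← hsq]; field_simp; ring
    have h2 : L / (v * s) + (1 + (rd - rf - v ^ 2 / 2) / v ^ 2) * (v * s) - v * s
        = a * v⁻¹ - c * v := by
      rw [h1, hc_def]; ring
    rw [h2, h1]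
  -- the first derivative agrees with the explicit vega on a neighborhood of σ
  have hderiv_eq : deriv (fun v : ℝ =>
      φ * (Cf * stdNormalCdf (φ * (L / (v * s) +
            (1 + (rd - rf - v ^ 2 / 2) / v ^ 2) * (v * s))) -
          Cd * stdNormalCdf (φ * (L / (v * s) +
            (1 + (rd - rf - v ^ 2 / 2) / v ^ 2) * (v * s) - v * s))))
      =ᶠ[nhds σ] fun v : ℝ => 1 / Real.sqrt (2 * Real.pi) *
        (Cf * (Real.exp (-(a * v⁻¹ + c * v) ^ 2 / 2) * (c - a * (v ^ 2)⁻¹)) -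
         Cd * (Real.exp (-(a * v⁻¹ - c * v) ^ 2 / 2) * (-c - a * (v ^ 2)⁻¹))) := by
    filter_upwards [Ioi_mem_nhds hσ] with v hv
    have hEqv : (fun v : ℝ =>
        φ * (Cf * stdNormalCdf (φ * (L / (v * s) +
              (1 + (rd - rf - v ^ 2 / 2) / v ^ 2) * (v * s))) -
            Cd * stdNormalCdf (φ * (L / (v * s) +
              (1 + (rd - rf - v ^ 2 / 2) / v ^ 2) * (v * s) - v * s))))
        =ᶠ[nhds v] fun w : ℝ => φ * (Cf * stdNormalCdf (φ * (a * w⁻¹ + c * w)) -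
            Cd * stdNormalCdf (φ * (a * w⁻¹ - c * w))) := by
      filter_upwards [Ioi_mem_nhds hv] with w hw
      exact hpt w hw
    rw [hEqv.deriv_eq, (vega_hasDerivAt a c Cf Cd φ hφ v (ne_of_gt hv)).deriv]
  -- second derivative of the canonical vega
  have hmain := volga_aux a c Cf Cd σ hσ.ne'
  have hfinal := hmain.congr_of_eventuallyEq hderiv_eq
  refine hfinal.congr_deriv ?_
  symm
  -- now prove the closed-form identity
  have hq0 : Real.sqrt (2 * Real.pi) ≠ 0 := by positivity
  have hE1 : Real.exp (-(2 * L + T * (2 * rd - 2 * rf + σ ^ 2)) ^ 2 / (8 * σ ^ 2 * T) - rf * T)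
      = Real.exp (-(a * σ⁻¹ + c * σ) ^ 2 / 2) * Real.exp (-rf * T) := by
    rw [← Real.exp_add]; congr 1
    rw [ha_def, hc_def, ← hsq]; field_simp; ring
  have hE2 : Real.exp (-(T * (-2 * rd + 2 * rf + σ ^ 2) - 2 * L) ^ 2 / (8 * σ ^ 2 * T) - rd * T)
      = Real.exp (-(a * σ⁻¹ - c * σ) ^ 2 / 2) * Real.exp (-rd * T) := by
    rw [← Real.exp_add]; congr 1
    rw [ha_def, hc_def, ← hsq]; field_simp; ring
  have hT32 : T ^ ((3:ℝ)/2) = s ^ 3 := by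
    rw [← hsq, ← Real.rpow_natCast s 2, ← Real.rpow_mul hs0.le, ← Real.rpow_natCast s 3]
    norm_num
  rw [hE1, hE2, hT32, hCf_def, hCd_def, ha_def, hc_def, ← hsq]
  field_simp
  ring
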